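/- For every subadditive valuation v on subsets of an m-element set, there exists an XOS valuation u such that for every set S, v(S) ≥ u(S) ≥ v(S)/O(log m). Consequently, an α-approximation algorithm for welfare maximization with XOS bidders yields an O(α · log m)-approximation for subadditive bidders. -/

import Mathlib

open Finset

/-- A valuation is subadditive if it is normalized, monotone and subadditive. -/
def IsSubadditiveVal {m : ℕ} (v : Finset (Fin m) → ℝ) : Prop :=
  v ∅ = 0 ∧ (∀ S T, S ⊆ T → v S ≤ v T) ∧ ∀ S T, v (S ∪ T) ≤ v S + v T

/-- A valuation is XOS if it is a pointwise maximum of finitely many additive valuations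
with nonnegative item values. -/
def IsXOSVal {m : ℕ} (u : Finset (Fin m) → ℝ) : Prop :=
  ∃ (t : ℕ) (a : Fin (t + 1) → Fin m → ℝ),
    (∀ r j, 0 ≤ a r j) ∧
    ∀ S, u S = univ.sup' univ_nonempty (fun r : Fin (t + 1) => ∑ j ∈ S, a r j)

/-- Partial harmonic sums, real valued. -/
noncomputable def Hc (k : ℕ) : ℝ := ∑ i ∈ Finset.range k, ((i : ℝ) + 1)⁻¹

lemma Hc_nonneg (k : ℕ) : 0 ≤ Hc k := by
  unfold Hc; positivity

lemma Hc_mono {k l : ℕ} (h : k ≤ l) : Hc k ≤ Hc l := by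
  unfold Hc
  apply Finset.sum_le_sum_of_subset_of_nonneg (Finset.range_subset_range.2 h)
  intro i _ _; positivity

lemma Hc_gap {k' k : ℕ} (h : k' ≤ k) (hk : 0 < k) :
    ((k : ℝ) - k') / k ≤ Hc k - Hc k' := by
  have hsub : Hc k - Hc k' = ∑ i ∈ Finset.Ico k' k, ((i : ℝ) + 1)⁻¹ := by
    rw [Hc, Hc, Finset.sum_Ico_eq_sub _ h]
  rw [hsub]
  have hbd : ∑ _i ∈ Finset.Ico k' k, ((k : ℝ))⁻¹ ≤ ∑ i ∈ Finset.Ico k' k, ((i : ℝ) + 1)⁻¹ := by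
    apply Finset.sum_le_sum
    intro i hi
    rw [Finset.mem_Ico] at hi
    have hik : (i : ℝ) + 1 ≤ k := by exact_mod_cast Nat.succ_le_of_lt hi.2
    have hipos : (0:ℝ) < (i : ℝ) + 1 := by positivity
    exact inv_anti₀ hipos hik
  refine le_trans ?_ hbd
  rw [Finset.sum_const, Nat.card_Ico, nsmul_eq_mul, Nat.cast_sub h, div_eq_mul_inv]

/-- Key construction: greedy min-density peeling. -/
lemma key_peel {m : ℕ} (v : Finset (Fin m) → ℝ) (hv : IsSubadditiveVal v) :
    ∀ S : Finset (Fin m), ∃ a : Fin m → ℝ,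
      (∀ j, 0 ≤ a j) ∧ (∀ j ∉ S, a j = 0) ∧
      (v S ≤ ∑ j ∈ S, a j) ∧ (∀ T ⊆ S, ∑ j ∈ T, a j ≤ Hc T.card * v T) := by
  obtain ⟨hv0, hvm, hvs⟩ := hv
  have hvnn : ∀ S, 0 ≤ v S := fun S => hv0 ▸ hvm ∅ S (Finset.empty_subset S)
  intro S
  induction S using Finset.strongInduction with
  | _ S IH =>
    rcases Finset.eq_empty_or_nonempty S with rfl | hS
    · exact ⟨fun _ => 0, fun _ => le_refl 0, fun _ _ => rfl, by simp [hv0],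
        fun T hT => by simp [Finset.subset_empty.mp hT, hv0]⟩
    · -- pick the minimum-density nonempty subset T₁ of S
      set P : Finset (Finset (Fin m)) := S.powerset.filter (·.Nonempty) with hP
      have hSP : S ∈ P := by
        rw [hP, Finset.mem_filter, Finset.mem_powerset]; exact ⟨Finset.Subset.refl S, hS⟩
      obtain ⟨T₁, hT₁P, hmin⟩ := Finset.exists_min_image P (fun T => v T / T.card) ⟨S, hSP⟩
      rw [hP, Finset.mem_filter, Finset.mem_powerset] at hT₁P
      obtain ⟨hT₁S, hT₁ne⟩ := hT₁P
      have hT₁card : (0:ℝ) < T₁.card := by exact_mod_cast Finset.card_pos.mpr hT₁ne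
      set d : ℝ := v T₁ / T₁.card with hd
      have hdnn : 0 ≤ d := div_nonneg (hvnn T₁) hT₁card.le
      set S₂ : Finset (Fin m) := S \ T₁ with hS₂
      have hS₂ss : S₂ ⊂ S := Finset.sdiff_ssubset hT₁S hT₁ne
      obtain ⟨a', ha'nn, ha'supp, ha'low, ha'up⟩ := IH S₂ hS₂ss
      refine ⟨fun j => if j ∈ T₁ then d else a' j, ?_, ?_, ?_, ?_⟩
      · intro j; dsimp only; split
        · exact hdnn
        · exact ha'nn j
      · intro j hj
        have hjT₁ : j ∉ T₁ := fun h => hj (hT₁S h)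
        simp only [hjT₁, if_false]
        exact ha'supp j (fun h => hj (hS₂ss.1 h))
      · -- lower bound on S
        have hsplit : S = T₁ ∪ S₂ := by
          rw [hS₂, Finset.union_sdiff_of_subset hT₁S]
        have hdisj : Disjoint T₁ S₂ := Finset.disjoint_sdiff
        rw [hsplit, Finset.sum_union hdisj]
        have h1 : ∑ j ∈ T₁, (if j ∈ T₁ then d else a' j) = T₁.card * d := by
          rw [Finset.sum_congr rfl (fun j hj => if_pos hj), Finset.sum_const, nsmul_eq_mul]
        have h2 : ∑ j ∈ S₂, (if j ∈ T₁ then d else a' j) = ∑ j ∈ S₂, a' j := by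
          refine Finset.sum_congr rfl (fun j hj => ?_)
          rw [if_neg (Finset.mem_sdiff.mp hj).2]
        rw [h1, h2]
        have hcd : (T₁.card : ℝ) * d = v T₁ := by
          rw [hd, mul_div_cancel₀ _ hT₁card.ne']
        rw [hcd]
        calc v (T₁ ∪ S₂) ≤ v T₁ + v S₂ := hvs T₁ S₂
          _ ≤ v T₁ + ∑ j ∈ S₂, a' j := by linarith [ha'low]
      · -- upper bound on every T ⊆ S
        intro T hTS
        rcases Finset.eq_empty_or_nonempty T with rfl | hTne
        · simp [hv0]
        have hTcard : (0:ℝ) < T.card := by exact_mod_cast Finset.card_pos.mpr hTne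
        set T' : Finset (Fin m) := T \ T₁ with hT'
        have hT'S₂ : T' ⊆ S₂ := by
          rw [hT', hS₂]; exact Finset.sdiff_subset_sdiff hTS (Finset.Subset.refl T₁)
        have hdisjT : Disjoint (T ∩ T₁) T' :=
          Finset.disjoint_sdiff.mono_left Finset.inter_subset_right
        have hsplitT : (T ∩ T₁) ∪ T' = T := by
          ext x
          simp only [Finset.mem_union, Finset.mem_inter, hT', Finset.mem_sdiff]
          tauto
        have hsum : ∑ j ∈ T, (if j ∈ T₁ then d else a' j)
            = (T ∩ T₁).card * d + ∑ j ∈ T', a' j := by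
          conv_lhs => rw [← hsplitT]
          rw [Finset.sum_union hdisjT,
            Finset.sum_congr rfl (fun j hj => if_pos (Finset.mem_inter.mp hj).2),
            Finset.sum_const, nsmul_eq_mul,
            Finset.sum_congr rfl (fun j hj => if_neg (Finset.mem_sdiff.mp hj).2)]
        rw [hsum]
        have hTP : T ∈ P := by
          rw [hP, Finset.mem_filter, Finset.mem_powerset]; exact ⟨hTS, hTne⟩
        have hdT : d ≤ v T / T.card := hmin T hTP
        have hk' : T'.card ≤ T.card := Finset.card_le_card (hT' ▸ Finset.sdiff_subset)
        have hcardsN : (T ∩ T₁).card + T'.card = T.card := by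
          rw [hT']; exact Finset.card_inter_add_card_sdiff T T₁
        have hcards : ((T ∩ T₁).card : ℝ) = (T.card : ℝ) - T'.card := by
          have : (((T ∩ T₁).card + T'.card : ℕ) : ℝ) = (T.card : ℝ) := by exact_mod_cast hcardsN
          push_cast at this
          linarith
        have hIH := ha'up T' hT'S₂
        have hvT' : v T' ≤ v T := hvm T' T (hT' ▸ Finset.sdiff_subset)
        have hgap := Hc_gap hk' (Finset.card_pos.mpr hTne)
        have hvTnn := hvnn T
        have hHk' := Hc_nonneg T'.card
        have h1 : ((T ∩ T₁).card : ℝ) * d ≤ ((T.card : ℝ) - T'.card) * (v T / T.card) := by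
          rw [hcards]
          have hnn : (0:ℝ) ≤ (T.card : ℝ) - T'.card := by
            have : (T'.card : ℝ) ≤ T.card := by exact_mod_cast hk'
            linarith
          exact mul_le_mul_of_nonneg_left hdT hnn
        have h2 : ∑ j ∈ T', a' j ≤ Hc T'.card * v T :=
          le_trans hIH (mul_le_mul_of_nonneg_left hvT' hHk')
        have e1 : ((T.card : ℝ) - T'.card) * (v T / T.card)
            = (((T.card : ℝ) - T'.card) / T.card) * v T := by ring
        have e2 : (((T.card : ℝ) - T'.card) / T.card) * v T + Hc T'.card * v T
            ≤ Hc T.card * v T := by nlinarith [hgap, hvTnn]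
        linarith [h1, h2, e1, e2]

/-- Every subadditive valuation on `m ≥ 2` items is `O(log m)`-approximated from below by
an XOS valuation; consequently, any allocation whose XOS-proxy welfare is within a factor
`α` of optimal has subadditive welfare within a factor `O(α · log m)` of optimal. -/
theorem subadditive_xos_approx :
    ∃ C : ℝ, 0 < C ∧ ∀ m : ℕ, 2 ≤ m →
      (∀ v : Finset (Fin m) → ℝ, IsSubadditiveVal v →
        ∃ u : Finset (Fin m) → ℝ, IsXOSVal u ∧
          ∀ S, u S ≤ v S ∧ v S ≤ C * Real.log m * u S) ∧
      (∀ (α : ℝ), 1 ≤ α → ∀ (n : ℕ) (v : Fin n → Finset (Fin m) → ℝ),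
        (∀ i, IsSubadditiveVal (v i)) →
        ∃ u : Fin n → Finset (Fin m) → ℝ, (∀ i, IsXOSVal (u i)) ∧
          ∀ A O : Fin n → Finset (Fin m),
            (∑ i, u i (O i)) ≤ α * ∑ i, u i (A i) →
            (∑ i, v i (O i)) ≤ C * α * Real.log m * ∑ i, v i (A i)) := by
  refine ⟨3, by norm_num, ?_⟩
  intro m hm
  have hm1 : 1 ≤ m := le_trans (by norm_num) hm
  have hlog2 : (0.6931471803 : ℝ) < Real.log 2 := Real.log_two_gt_d9
  have hlogm : Real.log 2 ≤ Real.log m := by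
    apply Real.log_le_log (by norm_num)
    exact_mod_cast hm
  have hlognn : (0:ℝ) ≤ Real.log m := by linarith
  have hHm_pos : (0:ℝ) < Hc m := by
    calc (0:ℝ) < 1 := one_pos
      _ = Hc 1 := by simp [Hc]
      _ ≤ Hc m := Hc_mono hm1
  have hHm_log : Hc m ≤ 3 * Real.log m := by
    have h1 : Hc m = ((harmonic m : ℚ) : ℝ) := by
      rw [Hc, harmonic]; push_cast; rfl
    have h2 := harmonic_le_one_add_log m
    rw [h1]
    have h3 : (1:ℝ) ≤ 2 * Real.log m := by linarith
    linarith
  have H1 : ∀ v : Finset (Fin m) → ℝ, IsSubadditiveVal v →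
      ∃ u : Finset (Fin m) → ℝ, IsXOSVal u ∧
        ∀ S, u S ≤ v S ∧ v S ≤ 3 * Real.log m * u S := by
    intro v hv
    have hvnn : ∀ S, 0 ≤ v S := fun S => hv.1 ▸ hv.2.1 ∅ S (Finset.empty_subset S)
    choose a hann hasupp halow haup using key_peel v hv
    set b : Finset (Fin m) → Fin m → ℝ := fun S j => a S j / Hc m with hb
    have hbnn : ∀ S j, 0 ≤ b S j := fun S j => div_nonneg (hann S j) hHm_pos.le
    have hbdom : ∀ S R, ∑ j ∈ R, b S j ≤ v R := by
      intro S R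
      have hzero : ∀ x ∈ R, x ∉ R ∩ S → a S x = 0 := by
        intro x hx hnx
        exact hasupp S x (fun hxS => hnx (Finset.mem_inter.mpr ⟨hx, hxS⟩))
      have hsum : ∑ j ∈ R ∩ S, a S j = ∑ j ∈ R, a S j :=
        Finset.sum_subset Finset.inter_subset_left hzero
      have hcard : (R ∩ S).card ≤ m := by
        calc (R ∩ S).card ≤ (univ : Finset (Fin m)).card := Finset.card_le_univ _
          _ = m := by simp
      have hle : ∑ j ∈ R, a S j ≤ Hc m * v R := by
        rw [← hsum]
        calc ∑ j ∈ R ∩ S, a S j ≤ Hc (R ∩ S).card * v (R ∩ S) :=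
              haup S (R ∩ S) Finset.inter_subset_right
          _ ≤ Hc m * v R :=
              mul_le_mul (Hc_mono hcard) (hv.2.1 _ _ Finset.inter_subset_left) (hvnn _)
                (Hc_nonneg m)
      rw [hb]
      simp only
      rw [← Finset.sum_div, div_le_iff₀ hHm_pos]
      linarith [hle]
    have hblow : ∀ S, v S / Hc m ≤ ∑ j ∈ S, b S j := by
      intro S
      rw [hb]
      simp only
      rw [← Finset.sum_div]
      exact div_le_div_of_nonneg_right (halow S) hHm_pos.le
    have htpow : 2 ^ m - 1 + 1 = 2 ^ m := Nat.sub_add_cancel Nat.one_le_two_pow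
    have hcardF : 2 ^ m - 1 + 1 = Fintype.card (Finset (Fin m)) := by
      rw [htpow, Fintype.card_finset, Fintype.card_fin]
    let e : Fin (2 ^ m - 1 + 1) ≃ Finset (Fin m) :=
      (finCongr hcardF).trans (Fintype.equivFin (Finset (Fin m))).symm
    set u : Finset (Fin m) → ℝ :=
      fun R => univ.sup' univ_nonempty (fun r : Fin (2 ^ m - 1 + 1) => ∑ j ∈ R, b (e r) j)
      with hu
    refine ⟨u, ⟨2 ^ m - 1, fun r j => b (e r) j, fun r j => hbnn _ _, fun S => rfl⟩, ?_⟩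
    intro R
    have huR1 : u R ≤ v R := Finset.sup'_le _ _ (fun r _ => hbdom (e r) R)
    have huR2 : v R / Hc m ≤ u R := by
      refine le_trans ?_
        (Finset.le_sup' (fun r => ∑ j ∈ R, b (e r) j) (Finset.mem_univ (e.symm R)))
      rw [Equiv.apply_symm_apply]
      exact hblow R
    have hunn : 0 ≤ u R := le_trans (div_nonneg (hvnn R) hHm_pos.le) huR2
    rw [div_le_iff₀ hHm_pos] at huR2
    refine ⟨huR1, ?_⟩
    calc v R ≤ u R * Hc m := huR2
      _ ≤ u R * (3 * Real.log m) := mul_le_mul_of_nonneg_left hHm_log hunn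
      _ = 3 * Real.log m * u R := by ring
  refine ⟨H1, ?_⟩
  intro α hα n v hv
  choose u hu1 hu2 using fun i => H1 (v i) (hv i)
  refine ⟨u, hu1, ?_⟩
  intro A O h
  have h3nn : (0:ℝ) ≤ 3 * Real.log m := by linarith
  calc ∑ i, v i (O i) ≤ ∑ i, 3 * Real.log (m:ℝ) * u i (O i) :=
        Finset.sum_le_sum (fun i _ => (hu2 i (O i)).2)
    _ = 3 * Real.log m * ∑ i, u i (O i) := by rw [Finset.mul_sum]
    _ ≤ 3 * Real.log m * (α * ∑ i, u i (A i)) := mul_le_mul_of_nonneg_left h h3nn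
    _ = (3 * α * Real.log m) * ∑ i, u i (A i) := by ring
    _ ≤ 3 * α * Real.log m * ∑ i, v i (A i) := by
        apply mul_le_mul_of_nonneg_left (Finset.sum_le_sum (fun i _ => (hu2 i (A i)).1))
        nlinarith
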